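/- Let n > 1 and let a₁, ..., aₙ be positive integers such that for every pair of indices i ≠ j, there exists a nonempty multiset of the cards whose geometric mean equals (aᵢ + aⱼ)/2, i.e., there exist m ≥ 1 and indices i₁, ..., iₘ with ((aᵢ + aⱼ)/2)^m = a_{i₁} · a_{i₂} ⋯ a_{iₘ}. Then a₁ = a₂ = ⋯ = aₙ. -/

import Mathlib

open Finset

theorem aux_imo2020p5 (n : ℕ) (hn : 1 < n) (a : Fin n → ℕ) (hpos : ∀ i, 0 < a i)
    (hgcd : Finset.univ.gcd a = 1)
    (h : ∀ i j : Fin n, i ≠ j → ∃ m : ℕ, 1 ≤ m ∧ ∃ f : Fin m → Fin n,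
        (a i + a j) ^ m = 2 ^ m * ∏ r : Fin m, a (f r)) :
    ∀ i j : Fin n, a i = a j := by
  by_contra hne
  push_neg at hne
  obtain ⟨i0, j0, hij0⟩ := hne
  -- all cards have the same parity
  have hpar : ∀ i j : Fin n, i ≠ j → 2 ∣ a i + a j := by
    intro i j hij
    obtain ⟨m, hm, f, hf⟩ := h i j hij
    have h2 : (2 : ℕ) ∣ (a i + a j) ^ m := by
      rw [hf]
      exact Dvd.dvd.mul_right (dvd_pow_self 2 (by omega)) _
    exact Nat.Prime.dvd_of_dvd_pow Nat.prime_two h2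
  -- all cards are odd
  have hodd : ∀ i, ¬ 2 ∣ a i := by
    intro i h2i
    have hall : ∀ j, 2 ∣ a j := by
      intro j
      by_cases hji : j = i
      · rw [hji]; exact h2i
      · have := hpar j i hji
        omega
    have h2g : (2 : ℕ) ∣ Finset.univ.gcd a := Finset.dvd_gcd (fun j _ => hall j)
    rw [hgcd] at h2g
    omega
  -- index of maximal card
  obtain ⟨iM, -, hiM⟩ := Finset.exists_max_image (univ : Finset (Fin n)) a ⟨i0, mem_univ i0⟩
  have hiM' : ∀ x, a x ≤ a iM := fun x => hiM x (mem_univ x)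
  have hM1 : a iM ≠ 1 := by
    intro h1
    have h1' : ∀ x, a x = 1 := by
      intro x
      have := hiM' x
      have := hpos x
      omega
    exact hij0 ((h1' i0).trans (h1' j0).symm)
  obtain ⟨p, hp, hpM⟩ := Nat.exists_prime_and_dvd hM1
  have hp2 : p ≠ 2 := by
    intro h2
    exact hodd iM (h2 ▸ hpM)
  -- set of cards not divisible by p is nonempty
  have hS : ∃ j, ¬ p ∣ a j := by
    by_contra hc
    push_neg at hc
    have : p ∣ Finset.univ.gcd a := Finset.dvd_gcd (fun j _ => hc j)
    rw [hgcd] at this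
    have := Nat.eq_one_of_dvd_one this
    have := Nat.Prime.one_lt hp
    omega
  obtain ⟨j1, hj1⟩ := hS
  set S : Finset (Fin n) := univ.filter (fun j => ¬ p ∣ a j) with hSdef
  have hSne : S.Nonempty := ⟨j1, by simp [hSdef, hj1]⟩
  obtain ⟨jb, hjbS, hjb⟩ := Finset.exists_max_image S a hSne
  have hpjb : ¬ p ∣ a jb := by
    have := hjbS
    simp [hSdef] at this
    exact this
  have hne2 : iM ≠ jb := by
    intro he
    exact hpjb (he ▸ hpM)
  obtain ⟨m, hm, f, hf⟩ := h iM jb hne2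
  -- p does not divide a iM + a jb
  have hpsum : ¬ p ∣ a iM + a jb := by
    intro hdvd
    exact hpjb ((Nat.dvd_add_right hpM).mp hdvd)
  -- every card in the product is not divisible by p
  have hcard : ∀ r : Fin m, ¬ p ∣ a (f r) := by
    intro r hr
    have hP : p ∣ ∏ r : Fin m, a (f r) :=
      hr.trans (Finset.dvd_prod_of_mem (fun r => a (f r)) (mem_univ r))
    have : p ∣ (a iM + a jb) ^ m := by
      rw [hf]
      exact hP.mul_left _
    exact hpsum (Nat.Prime.dvd_of_dvd_pow hp this)
  -- hence every card in the product is ≤ a jb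
  have hle : ∀ r : Fin m, a (f r) ≤ a jb := by
    intro r
    exact hjb (f r) (by simp [hSdef, hcard r])
  have hP : (∏ r : Fin m, a (f r)) ≤ (a jb) ^ m := by
    calc (∏ r : Fin m, a (f r)) ≤ ∏ _r : Fin m, a jb :=
          Finset.prod_le_prod (fun _ _ => Nat.zero_le _) (fun r _ => hle r)
      _ = (a jb) ^ m := by simp
  have hpow : (a iM + a jb) ^ m ≤ (2 * a jb) ^ m := by
    rw [hf, mul_pow]
    exact Nat.mul_le_mul_left _ hP
  have hsum : a iM + a jb ≤ 2 * a jb :=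
    (Nat.pow_le_pow_iff_left (by omega : m ≠ 0)).mp hpow
  have heq : a iM = a jb := le_antisymm (by omega) (hiM' jb)
  exact hpjb (heq ▸ hpM)

theorem stmt_11 (n : ℕ) (hn : 1 < n) (a : Fin n → ℕ) (hpos : ∀ i, 0 < a i)
    (h : ∀ i j : Fin n, i ≠ j →
      ∃ (m : ℕ), 1 ≤ m ∧ ∃ f : Fin m → Fin n,
        ((a i + a j : ℝ) / 2) ^ m = ∏ r : Fin m, (a (f r) : ℝ)) :
    ∀ i j : Fin n, a i = a j := by
  -- turn the real hypothesis into a natural-number one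
  have hnat : ∀ i j : Fin n, i ≠ j → ∃ m : ℕ, 1 ≤ m ∧ ∃ f : Fin m → Fin n,
      (a i + a j) ^ m = 2 ^ m * ∏ r : Fin m, a (f r) := by
    intro i j hij
    obtain ⟨m, hm, f, hf⟩ := h i j hij
    refine ⟨m, hm, f, ?_⟩
    rw [div_pow, div_eq_iff (by positivity : ((2 : ℝ)) ^ m ≠ 0)] at hf
    have hx : ((a i + a j : ℝ)) ^ m = 2 ^ m * ∏ r : Fin m, (a (f r) : ℝ) := by
      rw [hf]; ring
    exact_mod_cast hx
  -- normalize by the gcd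
  set d := Finset.univ.gcd a with hd
  have hdvd : ∀ i, d ∣ a i := fun i => Finset.gcd_dvd (mem_univ i)
  have hi0 : (⟨0, by omega⟩ : Fin n) ∈ (univ : Finset (Fin n)) := mem_univ _
  have hdpos : 0 < d := by
    rcases Nat.eq_zero_or_pos d with h0 | h
    · exfalso
      have := hdvd ⟨0, by omega⟩
      rw [h0] at this
      have h0' := Nat.eq_zero_of_zero_dvd this
      have := hpos ⟨0, by omega⟩
      omega
    · exact h
  set b : Fin n → ℕ := fun i => a i / d with hbdef
  have hab : ∀ i, a i = d * b i := fun i => (Nat.mul_div_cancel' (hdvd i)).symm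
  have hbpos : ∀ i, 0 < b i := by
    intro i
    have h1 := hab i
    have h2 := hpos i
    rcases Nat.eq_zero_or_pos (b i) with h0 | hk
    · rw [h0, mul_zero] at h1; omega
    · exact hk
  have hbgcd : Finset.univ.gcd b = 1 := by
    exact Finset.gcd_div_eq_one (f := a) hi0 (by have := hpos ⟨0, by omega⟩; omega)
  have hb : ∀ i j : Fin n, i ≠ j → ∃ m : ℕ, 1 ≤ m ∧ ∃ f : Fin m → Fin n,
      (b i + b j) ^ m = 2 ^ m * ∏ r : Fin m, b (f r) := by
    intro i j hij
    obtain ⟨m, hm, f, hf⟩ := hnat i j hij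
    refine ⟨m, hm, f, ?_⟩
    have h1 : (a i + a j) ^ m = d ^ m * (b i + b j) ^ m := by
      rw [hab i, hab j, ← mul_add, mul_pow]
    have h2 : (∏ r : Fin m, a (f r)) = d ^ m * ∏ r : Fin m, b (f r) := by
      calc (∏ r : Fin m, a (f r)) = ∏ r : Fin m, (d * b (f r)) := by
            exact Finset.prod_congr rfl (fun r _ => hab (f r))
        _ = (∏ _r : Fin m, d) * ∏ r : Fin m, b (f r) := by
            rw [← Finset.prod_mul_distrib]
        _ = d ^ m * ∏ r : Fin m, b (f r) := by simp
    rw [h1, h2] at hf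
    have hdm : 0 < d ^ m := pow_pos hdpos m
    have : d ^ m * (b i + b j) ^ m = d ^ m * (2 ^ m * ∏ r : Fin m, b (f r)) := by
      rw [hf]; ring
    exact Nat.eq_of_mul_eq_mul_left hdm this
  intro i j
  have := aux_imo2020p5 n hn b hbpos hbgcd hb i j
  rw [hab i, hab j, this]
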